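/- Let a_1,…,a_n,a∈ℕ and let V be the 1-VASS with states q_0,q_1,…,q_{n+1},q_f and transitions: (q_0,1,q_1); for each 1≤i≤n both (q_i,a_i,q_{i+1}) and (q_i,0,q_{i+1}); and (q_{n+1},−a,q_f). Then q_0(0)⇝*q_f(1) in V (monus semantics) if and only if there exists (x_1,…,x_n)∈{0,1}^n with x_1a_1+⋯+x_na_n=a. -/

import Mathlib

/-- A transition of a `d`-dimensional VASS over state set `Q`:
a source state, an update vector in `ℤ^d`, and a target state. -/
abbrev VTrans (d : ℕ) (Q : Type*) := Q × (Fin d → ℤ) × Q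

/-- A vector addition system with states (VASS), given by its set of transitions. -/
structure VASS (d : ℕ) (Q : Type*) where
  Δ : Set (VTrans d Q)

variable {d : ℕ} {Q : Type*}

/-- A sequence of transitions is a path if consecutive states match. -/
def IsPath (ρ : List (VTrans d Q)) : Prop := ρ.Chain' (fun t t' => t.2.2 = t'.1)

/-- A path of the VASS `V`. -/
def PathIn (V : VASS d Q) (ρ : List (VTrans d Q)) : Prop :=
  IsPath ρ ∧ ∀ t ∈ ρ, t ∈ V.Δ

/-- The path starts at state `s` (any state works for the empty path). -/
def FromState (s : Q) (ρ : List (VTrans d Q)) : Prop :=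
  match ρ with
  | [] => True
  | t :: _ => t.1 = s

/-- The last state of the run induced by `ρ` from state `s`. -/
def endState (s : Q) (ρ : List (VTrans d Q)) : Q := (ρ.map (fun t => t.2.2)).getLastD s

/-- Cast a vector over `ℕ` to a vector over `ℤ`. -/
def ofNatVec (v : Fin d → ℕ) : Fin d → ℤ := fun j => (v j : ℤ)

/-- The `i`-th vector of the ℤ-run induced by the path `ρ` from initial vector `v`. -/
def zrun (v : Fin d → ℤ) (ρ : List (VTrans d Q)) (i : ℕ) : Fin d → ℤ :=
  v + ((ρ.take i).map (fun t => t.2.1)).sum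

/-- The last vector of the ℤ-run induced by `ρ` from `v`. -/
def zend (v : Fin d → ℤ) (ρ : List (VTrans d Q)) : Fin d → ℤ := zrun v ρ ρ.length

/-- One step of the monus semantics: add `z` and truncate at `0` componentwise. -/
def mstep (v : Fin d → ℕ) (z : Fin d → ℤ) : Fin d → ℕ := fun j => ((v j : ℤ) + z j).toNat

/-- The `i`-th vector of the monus run induced by the path `ρ` from initial vector `v`. -/
def mrun (v : Fin d → ℕ) (ρ : List (VTrans d Q)) (i : ℕ) : Fin d → ℕ :=
  (ρ.take i).foldl (fun u t => mstep u t.2.1) v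

/-- The last vector of the monus run induced by `ρ` from `v`. -/
def mend (v : Fin d → ℕ) (ρ : List (VTrans d Q)) : Fin d → ℕ := mrun v ρ ρ.length

/-- The classical run induced by `ρ` from `v` exists: no value of the ℤ-run
drops below zero in any coordinate. -/
def ClassicalOK (v : Fin d → ℕ) (ρ : List (VTrans d Q)) : Prop :=
  ∀ i ≤ ρ.length, ∀ j, 0 ≤ zrun (ofNatVec v) ρ i j

/-- Classical reachability `s(v) →* t(w)`. -/
def ClassicalReach (V : VASS d Q) (s : Q) (v : Fin d → ℕ) (t : Q) (w : Fin d → ℕ) : Prop :=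
  ∃ ρ, PathIn V ρ ∧ FromState s ρ ∧ endState s ρ = t ∧ ClassicalOK v ρ ∧
    zend (ofNatVec v) ρ = ofNatVec w

/-- Reachability in ℤ-semantics `s(v) →ℤ* t(w)`. -/
def ZReach (V : VASS d Q) (s : Q) (v : Fin d → ℤ) (t : Q) (w : Fin d → ℤ) : Prop :=
  ∃ ρ, PathIn V ρ ∧ FromState s ρ ∧ endState s ρ = t ∧ zend v ρ = w

/-- Reachability in monus semantics `s(v) ⇝* t(w)`. -/
def MonusReach (V : VASS d Q) (s : Q) (v : Fin d → ℕ) (t : Q) (w : Fin d → ℕ) : Prop :=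
  ∃ ρ, PathIn V ρ ∧ FromState s ρ ∧ endState s ρ = t ∧ mend v ρ = w

/-- Coordinate `j` hits `0` in the ℤ-run (equivalently, classical run) induced
by `ρ` from `v` (at some index `1 ≤ i ≤ k`). -/
def HitsZeroZ (v : Fin d → ℤ) (ρ : List (VTrans d Q)) (j : Fin d) : Prop :=
  ∃ i, 1 ≤ i ∧ i ≤ ρ.length ∧ zrun v ρ i j = 0

/-- Coordinate `j` hits `0` in the monus run induced by `ρ` from `v`. -/
def HitsZeroM (v : Fin d → ℕ) (ρ : List (VTrans d Q)) (j : Fin d) : Prop :=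
  ∃ i, 1 ≤ i ∧ i ≤ ρ.length ∧ mrun v ρ i j = 0

/-- The monus run induced by `ρ` from `v` is lossy: at some step, for some
coordinate, the actual change differs from the transition's update. -/
def Lossy (v : Fin d → ℕ) (ρ : List (VTrans d Q)) : Prop :=
  ∃ (i : Fin ρ.length) (j : Fin d),
    (mrun v ρ ((i : ℕ) + 1) j : ℤ) ≠ (mrun v ρ (i : ℕ) j : ℤ) + (ρ.get i).2.1 j

/-- `mi ρ s₀ v₀`: the coordinatewise minimum (with `0`) of all values along
the ℤ-run induced by `ρ` from `v`. -/
def mi (v : Fin d → ℤ) (ρ : List (VTrans d Q)) : Fin d → ℤ :=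
  fun j => min 0 ((Finset.range (ρ.length + 1)).inf' Finset.nonempty_range_add_one
    (fun i => zrun v ρ i j))

/-- The reverse VASS: `(p,z,q)` is a transition iff `(q,-z,p)` is one of `V`. -/
def revV (V : VASS d Q) : VASS d Q := ⟨{tr | (tr.2.2, -tr.2.1, tr.1) ∈ V.Δ}⟩

/-- Coverability in monus semantics. -/
def MonusCover (V : VASS d Q) (s : Q) (v : Fin d → ℕ) (t : Q) (w : Fin d → ℕ) : Prop :=
  ∃ w', w ≤ w' ∧ MonusReach V s v t w'

/-- Coverability in classical semantics. -/
def ClassicalCover (V : VASS d Q) (s : Q) (v : Fin d → ℕ) (t : Q) (w : Fin d → ℕ) : Prop :=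
  ∃ w', w ≤ w' ∧ ClassicalReach V s v t w'

/-- The 1-VASS for the subset-sum reduction: states `q_0, q_1, …, q_{n+1}`
(encoded as `Sum.inl i` for `i : Fin (n+2)`) and `q_f` (encoded as `Sum.inr ()`),
with transitions `(q_0, 1, q_1)`; for each `1 ≤ i ≤ n` both `(q_i, a_i, q_{i+1})`
and `(q_i, 0, q_{i+1})`; and `(q_{n+1}, -a, q_f)`. -/
def ssVASS1 (n : ℕ) (as : Fin n → ℕ) (a : ℕ) : VASS 1 (Fin (n + 2) ⊕ Unit) :=
  ⟨{tr | tr = (Sum.inl ⟨0, by omega⟩, (fun _ => (1 : ℤ)), Sum.inl ⟨1, by omega⟩) ∨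
         (∃ i : Fin n, tr = (Sum.inl ⟨(i : ℕ) + 1, by have := i.isLt; omega⟩,
            (fun _ => (as i : ℤ)),
            Sum.inl ⟨(i : ℕ) + 2, by have := i.isLt; omega⟩)) ∨
         (∃ i : Fin n, tr = (Sum.inl ⟨(i : ℕ) + 1, by have := i.isLt; omega⟩,
            (fun _ => (0 : ℤ)),
            Sum.inl ⟨(i : ℕ) + 2, by have := i.isLt; omega⟩)) ∨
         tr = (Sum.inl ⟨n + 1, by omega⟩, (fun _ => -(a : ℤ)), Sum.inr ())}⟩

section Stmt17Aux

lemma mend_eq_foldl {d : ℕ} {Q : Type*} (v : Fin d → ℕ) (ρ : List (VTrans d Q)) :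
    mend v ρ = ρ.foldl (fun u t => mstep u t.2.1) v := by
  simp [mend, mrun]

lemma mend_cons {d : ℕ} {Q : Type*} (v : Fin d → ℕ) (t : VTrans d Q)
    (ρ : List (VTrans d Q)) :
    mend v (t :: ρ) = mend (mstep v t.2.1) ρ := by
  simp [mend_eq_foldl]

lemma endState_cons {d : ℕ} {Q : Type*} (s : Q) (t : VTrans d Q)
    (ρ : List (VTrans d Q)) :
    endState s (t :: ρ) = endState t.2.2 ρ := by
  simp only [endState, List.map_cons, List.getLastD_cons]

lemma fromState_of_chain {d : ℕ} {Q : Type*} (t : VTrans d Q) (ρ : List (VTrans d Q))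
    (h : List.Chain' (fun t t' => t.2.2 = t'.1) (t :: ρ)) : FromState t.2.2 ρ := by
  cases ρ with
  | nil => trivial
  | cons t' rest => exact ((List.isChain_cons_cons.mp h).1).symm

lemma pathIn_cons {d : ℕ} {Q : Type*} {V : VASS d Q} {t : VTrans d Q}
    {ρ : List (VTrans d Q)} (h : PathIn V (t :: ρ)) : PathIn V ρ :=
  ⟨List.IsChain.tail h.1, fun t' ht' => h.2 t' (List.mem_cons_of_mem _ ht')⟩

lemma sum_update_zero {n : ℕ} (as x : Fin n → ℕ) (j : Fin n) :
    ∑ i, (Function.update x j 0) i * as i + x j * as j = ∑ i, x i * as i := by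
  rw [← Finset.add_sum_erase _ (fun i => Function.update x j 0 i * as i) (Finset.mem_univ j),
      ← Finset.add_sum_erase _ (fun i => x i * as i) (Finset.mem_univ j)]
  have h : ∑ i ∈ Finset.univ.erase j, Function.update x j 0 i * as i
       = ∑ i ∈ Finset.univ.erase j, x i * as i :=
    Finset.sum_congr rfl fun i hi => by
      rw [Function.update_of_ne (Finset.ne_of_mem_erase hi)]
  simp only [Function.update_self, h]
  ring

lemma forward_aux (n : ℕ) (as : Fin n → ℕ) (a : ℕ) :
    ∀ m k (hk : k < n + 2), 1 ≤ k → k + m = n + 1 →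
    ∀ ρ : List (VTrans 1 (Fin (n + 2) ⊕ Unit)), PathIn (ssVASS1 n as a) ρ →
    FromState (Sum.inl ⟨k, hk⟩) ρ →
    endState (Sum.inl ⟨k, hk⟩ : Fin (n + 2) ⊕ Unit) ρ = Sum.inr () →
    ∀ v : ℕ, ∃ x : Fin n → ℕ, (∀ i, x i ≤ 1) ∧ (∀ i : Fin n, (i : ℕ) < k - 1 → x i = 0) ∧
      mend (fun _ => v) ρ = fun _ => (((v + ∑ i, x i * as i : ℕ) : ℤ) - (a : ℤ)).toNat := by
  intro m
  induction m with
  | zero =>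
    intro k hk hk1 hkm ρ hpath hfrom hend v
    have hkn : k = n + 1 := by omega
    subst hkn
    cases ρ with
    | nil => simp [endState] at hend
    | cons t ρ' =>
      have ht : t ∈ (ssVASS1 n as a).Δ := hpath.2 t List.mem_cons_self
      have hfrom' : t.1 = Sum.inl ⟨n + 1, hk⟩ := hfrom
      simp only [ssVASS1, Set.mem_setOf_eq] at ht
      rcases ht with hA | ⟨i, hB⟩ | ⟨i, hC⟩ | hD
      · rw [hA] at hfrom'; simp [Fin.ext_iff] at hfrom'
      · rw [hB] at hfrom'; simp [Fin.ext_iff] at hfrom'; have := i.isLt; omega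
      · rw [hC] at hfrom'; simp [Fin.ext_iff] at hfrom'; have := i.isLt; omega
      · subst hD
        cases ρ' with
        | cons t' rest =>
          have ht' : t' ∈ (ssVASS1 n as a).Δ := hpath.2 t' (by simp)
          have hchain : (Sum.inr () : Fin (n + 2) ⊕ Unit) = t'.1 :=
            (List.isChain_cons_cons.mp hpath.1).1
          simp only [ssVASS1, Set.mem_setOf_eq] at ht'
          rcases ht' with hA | ⟨i, hB⟩ | ⟨i, hC⟩ | hD <;>
            [rw [hA] at hchain; rw [hB] at hchain; rw [hC] at hchain; rw [hD] at hchain] <;>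
            simp at hchain
        | nil =>
          refine ⟨fun _ => 0, fun i => by simp, fun i _ => rfl, ?_⟩
          funext jj
          simp only [mend, mrun, mstep, List.take, List.foldl, List.length]
          simp
          omega
  | succ m ih =>
    intro k hk hk1 hkm ρ hpath hfrom hend v
    have hkn : k ≤ n := by omega
    cases ρ with
    | nil => simp [endState] at hend
    | cons t ρ' =>
      have ht : t ∈ (ssVASS1 n as a).Δ := hpath.2 t List.mem_cons_self
      have hfrom' : t.1 = Sum.inl ⟨k, hk⟩ := hfrom
      have hpath' : PathIn (ssVASS1 n as a) ρ' := pathIn_cons hpath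
      have hk' : k + 1 < n + 2 := by omega
      simp only [ssVASS1, Set.mem_setOf_eq] at ht
      rcases ht with hA | ⟨i, hB⟩ | ⟨i, hC⟩ | hD
      · rw [hA] at hfrom'; simp [Fin.ext_iff] at hfrom'; omega
      · -- transition with update as i
        rw [hB] at hfrom'
        simp only [Sum.inl.injEq, Fin.mk.injEq] at hfrom'
        have hstate : (Sum.inl ⟨(i : ℕ) + 2, by have := i.isLt; omega⟩ : Fin (n + 2) ⊕ Unit)
            = Sum.inl ⟨k + 1, hk'⟩ := by simp only [Sum.inl.injEq, Fin.mk.injEq]; omega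
        have hfrom2 : FromState (Sum.inl ⟨k + 1, hk'⟩ : Fin (n + 2) ⊕ Unit) ρ' := by
          have := fromState_of_chain t ρ' hpath.1
          rwa [hB, hstate] at this
        have hend2 : endState (Sum.inl ⟨k + 1, hk'⟩ : Fin (n + 2) ⊕ Unit) ρ' = Sum.inr () := by
          rw [endState_cons, hB, hstate] at hend; exact hend
        obtain ⟨x', hx1, hx0, hmend'⟩ :=
          ih (k + 1) hk' (by omega) (by omega) ρ' hpath' hfrom2 hend2 (v + as i)
        have hxi : x' i = 0 := hx0 i (by omega)
        refine ⟨Function.update x' i 1, ?_, ?_, ?_⟩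
        · intro jj
          rcases eq_or_ne jj i with h | h
          · subst h; simp
          · rw [Function.update_of_ne h]; exact hx1 jj
        · intro jj hjj
          have hne : jj ≠ i := by intro h; subst h; omega
          rw [Function.update_of_ne hne]; exact hx0 jj (by omega)
        · have hsum : ∑ l, (Function.update x' i 1) l * as l = as i + ∑ l, x' l * as l := by
            have h2 : Function.update (Function.update x' i 1) i 0 = x' := by
              rw [Function.update_idem, ← hxi, Function.update_eq_self]
            have := sum_update_zero as (Function.update x' i 1) i
            rw [h2, Function.update_self] at this
            omega
          rw [mend_cons, hB]
          have hms : mstep (fun _ => v : Fin 1 → ℕ) (fun _ => (as i : ℤ)) = fun _ => v + as i := by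
            funext jj; simp only [mstep]; omega
          rw [hms, hmend']
          funext jj
          congr 1
          push_cast [hsum]
          ring
      · -- transition with update 0
        rw [hC] at hfrom'
        simp only [Sum.inl.injEq, Fin.mk.injEq] at hfrom'
        have hstate : (Sum.inl ⟨(i : ℕ) + 2, by have := i.isLt; omega⟩ : Fin (n + 2) ⊕ Unit)
            = Sum.inl ⟨k + 1, hk'⟩ := by simp only [Sum.inl.injEq, Fin.mk.injEq]; omega
        have hfrom2 : FromState (Sum.inl ⟨k + 1, hk'⟩ : Fin (n + 2) ⊕ Unit) ρ' := by
          have := fromState_of_chain t ρ' hpath.1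
          rwa [hC, hstate] at this
        have hend2 : endState (Sum.inl ⟨k + 1, hk'⟩ : Fin (n + 2) ⊕ Unit) ρ' = Sum.inr () := by
          rw [endState_cons, hC, hstate] at hend; exact hend
        obtain ⟨x', hx1, hx0, hmend'⟩ :=
          ih (k + 1) hk' (by omega) (by omega) ρ' hpath' hfrom2 hend2 v
        refine ⟨x', hx1, fun jj hjj => hx0 jj (by omega), ?_⟩
        rw [mend_cons, hC]
        have hms : mstep (fun _ => v : Fin 1 → ℕ) (fun _ => (0 : ℤ)) = fun _ => v := by
          funext jj; simp only [mstep]; omega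
        rw [hms, hmend']
      · rw [hD] at hfrom'; simp [Fin.ext_iff] at hfrom'; omega

lemma backward_aux (n : ℕ) (as : Fin n → ℕ) (a : ℕ) :
    ∀ m k (hk : k < n + 2), 1 ≤ k → k + m = n + 1 →
    ∀ x : Fin n → ℕ, (∀ i, x i ≤ 1) → (∀ i : Fin n, (i : ℕ) < k - 1 → x i = 0) →
    ∀ v : ℕ, ∃ ρ : List (VTrans 1 (Fin (n + 2) ⊕ Unit)),
      PathIn (ssVASS1 n as a) ρ ∧ FromState (Sum.inl ⟨k, hk⟩) ρ ∧
      endState (Sum.inl ⟨k, hk⟩ : Fin (n + 2) ⊕ Unit) ρ = Sum.inr () ∧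
      mend (fun _ => v) ρ = fun _ => (((v + ∑ i, x i * as i : ℕ) : ℤ) - (a : ℤ)).toNat := by
  intro m
  induction m with
  | zero =>
    intro k hk hk1 hkm x hx1 hx0 v
    have hkn : k = n + 1 := by omega
    subst hkn
    have hsum : ∑ i, x i * as i = 0 :=
      Finset.sum_eq_zero fun i _ => by rw [hx0 i (by have := i.isLt; omega), zero_mul]
    refine ⟨[(Sum.inl ⟨n + 1, hk⟩, fun _ => -(a : ℤ), Sum.inr ())], ⟨?_, ?_⟩, rfl, ?_, ?_⟩
    · exact List.isChain_singleton _
    · intro t ht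
      simp only [List.mem_singleton] at ht
      subst ht
      simp [ssVASS1]
    · simp [endState]
    · funext jj
      simp only [mend, mrun, mstep, List.take, List.foldl, List.length]
      simp [hsum]
      omega
  | succ m ih =>
    intro k hk hk1 hkm x hx1 hx0 v
    have hkn : k ≤ n := by omega
    have hk' : k + 1 < n + 2 := by omega
    set j : Fin n := ⟨k - 1, by omega⟩ with hj
    obtain ⟨ρ', hpath', hfrom', hend', hmend'⟩ :=
      ih (k + 1) hk' (by omega) (by omega) (Function.update x j 0)
        (fun i => by
          rcases eq_or_ne i j with h | h
          · subst h; simp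
          · rw [Function.update_of_ne h]; exact hx1 i)
        (fun i hi => by
          rcases eq_or_ne i j with h | h
          · subst h; simp
          · rw [Function.update_of_ne h]
            refine hx0 i ?_
            have : (i : ℕ) ≠ k - 1 := fun hh => h (Fin.ext hh)
            omega)
        (v + x j * as j)
    set t : VTrans 1 (Fin (n + 2) ⊕ Unit) :=
      (Sum.inl ⟨k, hk⟩, fun _ => ((x j * as j : ℕ) : ℤ), Sum.inl ⟨k + 1, hk'⟩) with hT
    refine ⟨t :: ρ', ⟨?_, ?_⟩, rfl, ?_, ?_⟩
    · refine List.isChain_cons.mpr ⟨?_, hpath'.1⟩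
      intro b hb
      cases ρ' with
      | nil => simp at hb
      | cons t' rest =>
        simp only [List.head?_cons, Option.mem_some_iff] at hb
        subst hb
        have : t'.1 = Sum.inl ⟨k + 1, hk'⟩ := hfrom'
        rw [this]
    · intro t' ht'
      rcases List.mem_cons.mp ht' with h | h
      · subst h
        simp only [ssVASS1, Set.mem_setOf_eq]
        rcases Nat.le_one_iff_eq_zero_or_eq_one.mp (hx1 j) with hc | hc
        · refine Or.inr (Or.inr (Or.inl ⟨j, ?_⟩))
          simp only [hT, Prod.mk.injEq, Sum.inl.injEq, Fin.mk.injEq]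
          refine ⟨by have hjv : (j : ℕ) = k - 1 := rfl; omega, ?_, by have hjv : (j : ℕ) = k - 1 := rfl; omega⟩
          funext jj; simp [hc]
        · refine Or.inr (Or.inl ⟨j, ?_⟩)
          simp only [hT, Prod.mk.injEq, Sum.inl.injEq, Fin.mk.injEq]
          refine ⟨by have hjv : (j : ℕ) = k - 1 := rfl; omega, ?_, by have hjv : (j : ℕ) = k - 1 := rfl; omega⟩
          funext jj; simp [hc]
      · exact hpath'.2 t' h
    · rw [endState_cons]
      exact hend'
    · rw [mend_cons]
      have hms : mstep (fun _ => v : Fin 1 → ℕ) t.2.1 = fun _ => v + x j * as j := by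
        funext jj; simp only [hT, mstep]; omega
      rw [hms, hmend']
      funext jj
      congr 1
      have hsum := sum_update_zero as x j
      push_cast [← hsum]
      ring

end Stmt17Aux


/-- In the 1-VASS above, `q_0(0) ⇝* q_f(1)` (monus semantics)
iff there is `(x_1,…,x_n) ∈ {0,1}^n` with `x_1a_1 + ⋯ + x_na_n = a`. -/
theorem stmt17 (n : ℕ) (as : Fin n → ℕ) (a : ℕ) :
    MonusReach (ssVASS1 n as a) (Sum.inl ⟨0, by omega⟩) (fun _ => 0)
      (Sum.inr ()) (fun _ => 1) ↔
    ∃ x : Fin n → ℕ, (∀ i, x i ≤ 1) ∧ ∑ i, x i * as i = a := by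
  constructor
  · rintro ⟨ρ, hpath, hfrom, hend, hmend⟩
    cases ρ with
    | nil => simp [endState] at hend
    | cons t ρ' =>
      have ht : t ∈ (ssVASS1 n as a).Δ := hpath.2 t List.mem_cons_self
      have hfrom' : t.1 = Sum.inl ⟨0, by omega⟩ := hfrom
      simp only [ssVASS1, Set.mem_setOf_eq] at ht
      rcases ht with hA | ⟨i, hB⟩ | ⟨i, hC⟩ | hD
      · have hfrom2 : FromState (Sum.inl ⟨1, by omega⟩ : Fin (n + 2) ⊕ Unit) ρ' := by
          have := fromState_of_chain t ρ' hpath.1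
          rwa [hA] at this
        have hend2 : endState (Sum.inl ⟨1, by omega⟩ : Fin (n + 2) ⊕ Unit) ρ' = Sum.inr () := by
          rw [endState_cons, hA] at hend; exact hend
        obtain ⟨x, hx1, _, heq⟩ := forward_aux n as a n 1 (by omega) le_rfl (by omega) ρ'
          (pathIn_cons hpath) hfrom2 hend2 1
        refine ⟨x, hx1, ?_⟩
        rw [mend_cons, hA] at hmend
        have hms : mstep (fun _ => (0 : ℕ) : Fin 1 → ℕ) (fun _ => (1 : ℤ)) = fun _ => 1 := by
          funext jj; simp only [mstep]; omega
        rw [hms, heq] at hmend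
        have h1 := congrFun hmend ⟨0, by omega⟩
        omega
      · rw [hB] at hfrom'; simp [Fin.ext_iff] at hfrom'
      · rw [hC] at hfrom'; simp [Fin.ext_iff] at hfrom'
      · rw [hD] at hfrom'; simp [Fin.ext_iff] at hfrom'
  · rintro ⟨x, hx1, hsum⟩
    obtain ⟨ρ', hpath', hfrom', hend', hmend'⟩ :=
      backward_aux n as a n 1 (by omega) le_rfl (by omega) x hx1
        (fun i hi => absurd hi (by omega)) 1
    refine ⟨(Sum.inl ⟨0, by omega⟩, fun _ => (1 : ℤ), Sum.inl ⟨1, by omega⟩) :: ρ',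
      ⟨?_, ?_⟩, rfl, ?_, ?_⟩
    · refine List.isChain_cons.mpr ⟨?_, hpath'.1⟩
      intro b hb
      cases ρ' with
      | nil => simp at hb
      | cons t' rest =>
        simp only [List.head?_cons, Option.mem_some_iff] at hb
        subst hb
        exact (show t'.1 = _ from hfrom').symm
    · intro t' ht'
      rcases List.mem_cons.mp ht' with h | h
      · subst h
        simp [ssVASS1]
      · exact hpath'.2 t' h
    · rw [endState_cons]
      exact hend'
    · rw [mend_cons]
      have hms : mstep (fun _ => (0 : ℕ) : Fin 1 → ℕ) (fun _ => (1 : ℤ)) = fun _ => 1 := by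
        funext jj; simp only [mstep]; omega
      rw [show mstep (fun _ => (0:ℕ)) ((Sum.inl ⟨0, by omega⟩, fun _ => (1 : ℤ), (Sum.inl ⟨1, by omega⟩ : Fin (n+2) ⊕ Unit)) : VTrans 1 (Fin (n+2) ⊕ Unit)).2.1 = fun _ => 1 from hms, hmend']
      funext jj
      rw [hsum]
      omega
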